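/- arXiv:1405.4025 — 2 statements merged into one kernel-verified Lean document; each statement's English description precedes it below -/
import Mathlib

section
/- Let R be the ring of integers of ℚ(√d) with d < 0 squarefree, written R = ℤ + ℤω. Let n = a + bω ∈ R with N(n) = |n|² odd, |n| ≠ 1, and gcd(b, N(n)) = 1. Then for every x ∈ R there exist q ∈ R and r ∈ ℤ with |r| ≤ (N(n)-1)/2 such that x = nq + r. -/
open Complex

theorem division_with_integer_remainder (d : ℤ) (hd : d < 0) (hsf : Squarefree d)
    (ω : ℂ)
    (hω : ω = if d % 4 = 1 then (1 + Complex.I * Real.sqrt (-d : ℤ)) / 2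
      else Complex.I * Real.sqrt (-d : ℤ))
    (a b : ℤ) (n : ℂ) (hn : n = (a : ℂ) + (b : ℂ) * ω)
    (N : ℤ) (hN : (N : ℝ) = Complex.normSq n)
    (hNodd : Odd N) (hN1 : N ≠ 1) (hcop : IsCoprime b N)
    (x : ℂ) (hx : ∃ s t : ℤ, x = (s : ℂ) + (t : ℂ) * ω) :
    ∃ q : ℂ, (∃ s t : ℤ, q = (s : ℂ) + (t : ℂ) * ω) ∧
      ∃ r : ℤ, 2 * |r| ≤ N - 1 ∧ x = n * q + (r : ℂ) := by
  obtain ⟨s, t, hx'⟩ := hx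
  set e : ℤ := if d % 4 = 1 then (d-1)/4 else d with he
  set f : ℤ := if d % 4 = 1 then 1 else 0 with hf
  have hdnn : (0:ℝ) ≤ ((-d : ℤ) : ℝ) := by
    have : (0:ℤ) ≤ -d := by omega
    exact_mod_cast this
  have hsq : ((Real.sqrt ((-d : ℤ) : ℝ) : ℝ) : ℂ)^2 = ((-d : ℤ) : ℂ) := by
    rw [← Complex.ofReal_pow, Real.sq_sqrt hdnn]
    norm_cast
  have hω2 : ω^2 = (e : ℂ) + (f : ℂ) * ω := by
    by_cases h4 : d % 4 = 1
    · have he4 : (4:ℤ) * ((d-1)/4) = d - 1 := by omega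
      have he4c : (4:ℂ) * (((d-1)/4 : ℤ) : ℂ) = (d:ℂ) - 1 := by exact_mod_cast he4
      rw [hω, if_pos h4, he, hf, if_pos h4, if_pos h4]
      push_cast
      push_cast at hsq he4c
      linear_combination (1/4 : ℂ) * Complex.I_sq * ((Real.sqrt (-(d:ℝ)) : ℂ))^2 + (-1/4 : ℂ) * hsq - (1/4:ℂ) * he4c
    · rw [hω, if_neg h4, he, hf, if_neg h4, if_neg h4]
      push_cast
      push_cast at hsq
      linear_combination Complex.I_sq * ((Real.sqrt (-(d:ℝ)) : ℂ))^2 - hsq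
  have hconj : (starRingEnd ℂ) ω = (f : ℂ) - ω := by
    by_cases h4 : d % 4 = 1
    · rw [hω, if_pos h4, hf, if_pos h4]
      simp [Complex.conj_I, map_ofNat]
      ring
    · rw [hω, if_neg h4, hf, if_neg h4]
      simp [Complex.conj_I, map_ofNat]
  have hNc : (N : ℂ) = n * (starRingEnd ℂ) n := by
    rw [Complex.mul_conj, ← hN]
    push_cast
    ring
  have hNint : N = a^2 + a*b*f - e*b^2 := by
    have hexp : (N : ℂ) = ((a^2 + a*b*f - e*b^2 : ℤ) : ℂ) := by
      rw [hNc, hn]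
      have hconjn : (starRingEnd ℂ) ((a : ℂ) + (b : ℂ) * ω) = (a:ℂ) + (b:ℂ) * ((f:ℂ) - ω) := by
        simp [hconj]
      rw [hconjn]
      push_cast
      linear_combination (-(b:ℂ)^2) * hω2
    exact_mod_cast hexp
  -- N ≥ 3
  have hN0 : 0 ≤ N := by
    have := Complex.normSq_nonneg n
    rw [← hN] at this
    exact_mod_cast this
  obtain ⟨w, hw⟩ := hNodd
  have hNpos : 0 < N := by omega
  have hNne : N ≠ 0 := by omega
  -- Bezout
  have hcop' := hcop.symm
  obtain ⟨u₀, v₀, hbez⟩ := hcop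
  set m : ℤ := s - t*a*u₀ with hm
  obtain ⟨r, k, hrk, hrb⟩ : ∃ r k : ℤ, m - r = N * k ∧ 2*|r| ≤ N - 1 := by
    have h0 : 0 ≤ m % N := Int.emod_nonneg m hNne
    have h1 : m % N < N := Int.emod_lt_of_pos m hNpos
    have hdd : m % N = m - N * (m / N) := Int.emod_def m N
    by_cases hc : m % N ≤ w
    · refine ⟨m % N, m / N, by linear_combination -hdd, ?_⟩
      rw [abs_of_nonneg h0]; omega
    · refine ⟨m % N - N, m / N + 1, by linear_combination -hdd, ?_⟩
      rw [abs_of_nonpos (by omega)]; omega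
  have hsr : s - r = t*a*u₀ + N*k := by linear_combination hrk
  -- divisibility for U
  set X : ℤ := a^2*u₀ + a*b*f*u₀ - e*b with hX
  have hbX : b * X = N * (u₀*b - e*b^2*v₀) := by
    rw [hX]
    linear_combination (-u₀*b)*hNint + e*b^2*hbez
  obtain ⟨X', hX'⟩ : N ∣ X := hcop'.dvd_of_dvd_mul_left ⟨_, hbX⟩
  set U : ℤ := t*X' + k*(a+f*b) with hUdef
  set V : ℤ := a*t*v₀ - b*k with hVdef
  have hU : (s-r)*(a+f*b) - e*b*t = N*U := by
    rw [hUdef]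
    linear_combination (a+f*b)*hsr + t*hX'
  have hVe : a*t - b*(s-r) = N*V := by
    rw [hVdef]
    linear_combination (-b)*hsr - (a*t)*hbez
  have eq1 : a*U + e*b*V = s - r := by
    have h : N * (a*U + e*b*V) = N * (s - r) := by
      linear_combination -a*hU - e*b*hVe - (s-r)*hNint
    exact mul_left_cancel₀ hNne h
  have eq2 : b*U + (a+f*b)*V = t := by
    have h : N * (b*U + (a+f*b)*V) = N * t := by
      linear_combination -b*hU - (a+f*b)*hVe - t*hNint
    exact mul_left_cancel₀ hNne h
  refine ⟨(U : ℂ) + (V : ℂ) * ω, ⟨U, V, rfl⟩, r, hrb, ?_⟩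
  have e1c : (a:ℂ)*(U:ℂ) + (e:ℂ)*(b:ℂ)*(V:ℂ) = (s:ℂ) - (r:ℂ) := by exact_mod_cast eq1
  have e2c : (b:ℂ)*(U:ℂ) + ((a:ℂ)+(f:ℂ)*(b:ℂ))*(V:ℂ) = (t:ℂ) := by exact_mod_cast eq2
  rw [hx', hn]
  linear_combination -((b:ℂ)*(V:ℂ))*hω2 - e1c - ω*e2c
end

section
/- In any integral domain (or its fraction field): for n ∈ D and b ∈ D with b ≠ 0, nb+1 ≠ 0, and 4(nb+1) - n ≠ 0, one has 4/(4(nb+1)-n) = 1/(nb+1) + 1/((4(nb+1)-n)·b) - 1/((4(nb+1)-n)·(nb+1)·b). -/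
theorem key_identity_r_one (D : Type*) [CommRing D] [IsDomain D]
    (K : Type*) [Field K] [Algebra D K] [IsFractionRing D K]
    (n b : D) (hb : b ≠ 0) (h1 : n * b + 1 ≠ 0) (h2 : 4 * (n * b + 1) - n ≠ 0) :
    (4 : K) / algebraMap D K (4 * (n * b + 1) - n) =
      1 / algebraMap D K (n * b + 1) +
        1 / algebraMap D K ((4 * (n * b + 1) - n) * b) -
        1 / algebraMap D K ((4 * (n * b + 1) - n) * (n * b + 1) * b) := by
  have inj := IsFractionRing.injective D K
  set N := algebraMap D K n with hN
  set B := algebraMap D K b with hB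
  have h4 : algebraMap D K (4 : D) = (4 : K) := map_ofNat _ 4
  have e1 : algebraMap D K (n * b + 1) = N * B + 1 := by
    rw [map_add, map_mul, map_one]
  have e2 : algebraMap D K (4 * (n * b + 1) - n) = 4 * (N * B + 1) - N := by
    rw [map_sub, map_mul, e1, h4]
  have hb' : B ≠ 0 := (map_ne_zero_iff _ inj).mpr hb
  have h1' : N * B + 1 ≠ 0 := e1 ▸ (map_ne_zero_iff _ inj).mpr h1
  have h2' : 4 * (N * B + 1) - N ≠ 0 := e2 ▸ (map_ne_zero_iff _ inj).mpr h2
  rw [map_mul, map_mul, map_mul, e1, e2, ← hB]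
  field_simp
  ring
end
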